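/- For all natural numbers d, n and every natural number s, Ψ_d(s, n) ≤ Ψ_d(⌊(n·d)/2⌋, n); that is, the number of blocks with a given sum is maximized when the sum equals ⌊n·d/2⌋. -/

import Mathlib

/-- The sum of the pixel values of a block. -/
def blockSum {d n : ℕ} (v : Fin n → Fin (d + 1)) : ℕ := ∑ i, (v i : ℕ)

/-- `Psi d s n` is the number of blocks `v : Fin n → Fin (d+1)` with `blockSum v = s`. -/
def Psi (d s n : ℕ) : ℕ :=
  (Finset.univ.filter (fun v : Fin n → Fin (d + 1) => blockSum v = s)).card

lemma blockSum_le {d n : ℕ} (v : Fin n → Fin (d + 1)) : blockSum v ≤ n * d := by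
  calc blockSum v ≤ ∑ _i : Fin n, d := Finset.sum_le_sum fun i _ => Fin.is_le _
    _ = n * d := by simp [mul_comm]

lemma psi_eq_zero {d s n : ℕ} (h : n * d < s) : Psi d s n = 0 := by
  rw [Psi, Finset.card_eq_zero, Finset.filter_eq_empty_iff]
  intro v _
  have := blockSum_le v
  omega

lemma blockSum_rev {d n : ℕ} (v : Fin n → Fin (d + 1)) :
    blockSum (fun i => (v i).rev) = n * d - blockSum v := by
  have h : blockSum (fun i => (v i).rev) + blockSum v = n * d := by
    rw [blockSum, blockSum, ← Finset.sum_add_distrib]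
    have key : ∀ i : Fin n, (((v i).rev : ℕ) + (v i : ℕ)) = d := by
      intro i
      have h1 := Fin.is_le (v i)
      have h2 := Fin.val_rev (v i)
      omega
    calc ∑ i, (((v i).rev : ℕ) + (v i : ℕ)) = ∑ _i : Fin n, d :=
          Finset.sum_congr rfl fun i _ => key i
      _ = n * d := by simp [mul_comm]
  omega

lemma psi_symm {d n s : ℕ} (h : s ≤ n * d) : Psi d s n = Psi d (n * d - s) n := by
  rw [Psi, Psi]
  refine Finset.card_nbij' (fun v => fun i => (v i).rev) (fun w => fun i => (w i).rev)
    ?hi ?hj ?li ?ri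
  case hi =>
    intro v hv
    simp only [Finset.mem_coe, Finset.mem_filter, Finset.mem_univ, true_and] at hv ⊢
    rw [blockSum_rev, hv]
  case hj =>
    intro w hw
    simp only [Finset.mem_coe, Finset.mem_filter, Finset.mem_univ, true_and] at hw ⊢
    rw [blockSum_rev, hw]
    omega
  case li => intro v _; funext i; simp [Fin.rev_rev]
  case ri => intro w _; funext i; simp [Fin.rev_rev]

lemma psi_succ (d n s : ℕ) :
    Psi d s (n + 1) = ∑ j ∈ Finset.range (d + 1),
      if j ≤ s then Psi d (s - j) n else 0 := by
  classical
  have step1 : Psi d s (n + 1) =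
      ∑ a : Fin (d + 1), if (a : ℕ) ≤ s then Psi d (s - a) n else 0 := by
    rw [Psi, Finset.card_eq_sum_card_fiberwise
      (f := fun v : Fin (n + 1) → Fin (d + 1) => v 0) (t := Finset.univ)
      (fun _ _ => Finset.mem_univ _)]
    refine Finset.sum_congr rfl fun a _ => ?_
    rw [Finset.filter_filter]
    by_cases hle : (a : ℕ) ≤ s
    · rw [if_pos hle, Psi]
      refine Finset.card_nbij' (fun v => Fin.tail v) (fun w => Fin.cons a w)
        ?hi ?hj ?li ?ri
      case hi =>
        intro v hv
        simp only [Finset.mem_coe, Finset.mem_filter, Finset.mem_univ, true_and] at hv ⊢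
        obtain ⟨hsum, h0⟩ := hv
        have hdec : blockSum v = (v 0 : ℕ) + blockSum (Fin.tail v) := by
          rw [blockSum, Fin.sum_univ_succ]; rfl
        rw [h0] at hdec
        omega
      case hj =>
        intro w hw
        simp only [Finset.mem_coe, Finset.mem_filter, Finset.mem_univ, true_and] at hw ⊢
        have hdec : blockSum (Fin.cons a w) = (a : ℕ) + blockSum w := by
          rw [blockSum, Fin.sum_univ_succ]
          simp [blockSum]
        refine ⟨?_, rfl⟩
        rw [hdec, hw]
        omega
      case li =>
        intro v hv
        simp only [Finset.mem_coe, Finset.mem_filter] at hv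
        show Fin.cons a (Fin.tail v) = v
        rw [← hv.2.2]
        exact Fin.cons_self_tail v
      case ri =>
        intro w _
        simp [Fin.tail_cons]
    · rw [if_neg hle]
      rw [Finset.card_eq_zero, Finset.filter_eq_empty_iff]
      intro v _
      rintro ⟨hsum, h0⟩
      have hle2 : (v 0 : ℕ) ≤ blockSum v := by
        rw [blockSum]
        exact Finset.single_le_sum (f := fun i => ((v i : ℕ))) (fun _ _ => Nat.zero_le _)
          (Finset.mem_univ 0)
      rw [hsum, h0] at hle2
      omega
  rw [step1, Fin.sum_univ_eq_sum_range (fun j => if j ≤ s then Psi d (s - j) n else 0)]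

lemma psi_step (d n : ℕ)
    (M : ∀ a b, a ≤ b → a + b ≤ n * d → Psi d a n ≤ Psi d b n) :
    ∀ s, 2 * s < (n + 1) * d → Psi d s (n + 1) ≤ Psi d (s + 1) (n + 1) := by
  intro s hs
  have hexp : (n + 1) * d = n * d + d := by ring
  rw [psi_succ, psi_succ]
  rw [Finset.sum_range_succ, Finset.sum_range_succ']
  have hshift : ∀ j ∈ Finset.range d,
      (if j ≤ s then Psi d (s - j) n else 0) =
      (if j + 1 ≤ s + 1 then Psi d (s + 1 - (j + 1)) n else 0) := by
    intro j _
    simp [Nat.succ_sub_succ]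
  rw [Finset.sum_congr rfl hshift]
  have hlast : (if d ≤ s then Psi d (s - d) n else 0) ≤
      (if (0:ℕ) ≤ s + 1 then Psi d (s + 1 - 0) n else 0) := by
    rw [if_pos (Nat.zero_le _)]
    by_cases hd : d ≤ s
    · rw [if_pos hd]
      exact M (s - d) (s + 1 - 0) (by omega) (by omega)
    · simp [hd]
  exact Nat.add_le_add_left hlast _
  -- note: goal shape is sum + last ≤ sum + first

lemma psi_mono (d : ℕ) : ∀ n a b, a ≤ b → a + b ≤ n * d → Psi d a n ≤ Psi d b n := by
  intro n
  induction n with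
  | zero =>
    intro a b hab h
    have ha : a = 0 := by omega
    have hb : b = 0 := by omega
    rw [ha, hb]
  | succ n ih =>
    have hexp : (n + 1) * d = n * d + d := by ring
    have incr : ∀ b, 2 * b ≤ (n + 1) * d + 1 → ∀ a, a ≤ b →
        Psi d a (n + 1) ≤ Psi d b (n + 1) := by
      intro b
      induction b with
      | zero =>
        intro _ a ha
        have : a = 0 := by omega
        rw [this]
      | succ b ihb =>
        intro hb a ha
        rcases Nat.lt_or_ge a (b + 1) with h | h
        · have h1 : Psi d a (n + 1) ≤ Psi d b (n + 1) := ihb (by omega) a (by omega)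
          have h2 : Psi d b (n + 1) ≤ Psi d (b + 1) (n + 1) :=
            psi_step d n ih b (by omega)
          omega
        · have : a = b + 1 := by omega
          rw [this]
    intro a b hab h
    rcases le_or_gt (2 * b) ((n + 1) * d + 1) with hb | hb
    · exact incr b hb a hab
    · have hble : b ≤ (n + 1) * d := by omega
      rw [psi_symm hble]
      exact incr _ (by omega) a (by omega)

theorem psi_le_psi_middle (d n s : ℕ) :
    Psi d s n ≤ Psi d (n * d / 2) n := by
  set m := n * d / 2 with hm
  have hm2 : 2 * m ≤ n * d := by omega
  rcases le_or_gt s (n * d) with hs | hs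
  · rcases le_or_gt s m with h | h
    · exact psi_mono d n s m h (by omega)
    · rw [psi_symm hs]
      exact psi_mono d n (n * d - s) m (by omega) (by omega)
  · rw [psi_eq_zero hs]
    exact Nat.zero_le _
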